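/- Let V and H be real Hilbert spaces and ι : V → H a continuous linear map with ‖ι v‖_H ≤ c ‖v‖_V for all v ∈ V. Let α, β, γ > 0 with ϰ := β − γ/α > 0, and let g : (0,∞) → ℝ be such that g and g' are absolutely continuous and summable on (0,∞), g ≥ 0, g' ≤ 0, and κ := ∫₀^∞ g(s) ds < γ. Then there exists C ≥ 1, depending only on α, β, γ, κ, c, such that for all u, v ∈ V, w ∈ H and every strongly measurable η : (0,∞) → V with ∫₀^∞ −g'(s) ‖η(s)‖_V² ds < ∞ and ∫₀^∞ g(s) ‖η(s)‖_V² ds < ∞, setting E = ‖u‖_V² + ‖v‖_V² + ‖w‖_H² + ∫₀^∞ −g'(s) ‖η(s)‖_V² ds and F = ((γ−κ)/α) ‖v + α u‖_V² + ((ϰα + κ)/α) ‖v‖_V² + ‖w + α ι v‖_H² + ∫₀^∞ −g'(s) ‖η(s)‖_V² ds + α ∫₀^∞ g(s) ‖η(s)‖_V² ds + 2 ∫₀^∞ g(s) ⟨η(s), v⟩_V ds, one has (1/C) E ≤ F ≤ C (E + ∫₀^∞ g(s) ‖η(s)‖_V² ds). -/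

import Mathlib

open MeasureTheory Filter Topology


private lemma mgt_sq_add_le (a b : ℝ) : (a + b) ^ 2 ≤ 2 * a ^ 2 + 2 * b ^ 2 := by
  nlinarith [sq_nonneg (a - b)]

private lemma mgt_sq_le_of_le {a b : ℝ} (h0 : 0 ≤ a) (h : a ≤ b) : a ^ 2 ≤ b ^ 2 := by
  nlinarith

private lemma mgt_mul_le_sum_sq (a b : ℝ) : a * b ≤ a ^ 2 + b ^ 2 := by
  nlinarith [sq_nonneg (a - b), sq_nonneg (a + b)]

set_option maxHeartbeats 1000000 in
/-- Lemma 7.1 of the paper: the energy-like functional `F` is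
"almost" equivalent to the energy `E`:
`(1/C) E ≤ F ≤ C (E + ∫₀^∞ g(s) ‖η(s)‖² ds)`. -/
theorem mgt_energy_functional_equivalence
    {V H : Type*} [NormedAddCommGroup V] [InnerProductSpace ℝ V] [CompleteSpace V]
    [NormedAddCommGroup H] [InnerProductSpace ℝ H] [CompleteSpace H]
    (ι : V →L[ℝ] H) (c : ℝ) (hι : ∀ v : V, ‖ι v‖ ≤ c * ‖v‖)
    (α β γ : ℝ) (hα : 0 < α) (hβ : 0 < β) (hγ : 0 < γ) (hϰ : 0 < β - γ / α)
    (g g' : ℝ → ℝ)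
    (hgderiv : ∀ s ∈ Set.Ioi (0 : ℝ), HasDerivAt g (g' s) s)
    (hFTC : ∀ a b : ℝ, 0 < a → a ≤ b → g b - g a = ∫ s in a..b, g' s)
    (hg_int : IntegrableOn g (Set.Ioi 0))
    (hg'_int : IntegrableOn g' (Set.Ioi 0))
    (hg_nonneg : ∀ s ∈ Set.Ioi (0 : ℝ), 0 ≤ g s)
    (hg'_nonpos : ∀ s ∈ Set.Ioi (0 : ℝ), g' s ≤ 0)
    (hκγ : (∫ s in Set.Ioi (0 : ℝ), g s) < γ) :
    ∃ C : ℝ, 1 ≤ C ∧ ∀ (u v : V) (w : H) (η : ℝ → V),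
      AEStronglyMeasurable η (MeasureTheory.volume.restrict (Set.Ioi 0)) →
      IntegrableOn (fun s => -g' s * ‖η s‖ ^ 2) (Set.Ioi 0) →
      IntegrableOn (fun s => g s * ‖η s‖ ^ 2) (Set.Ioi 0) →
      (1 / C) * (‖u‖ ^ 2 + ‖v‖ ^ 2 + ‖w‖ ^ 2 + ∫ s in Set.Ioi (0 : ℝ), -g' s * ‖η s‖ ^ 2)
        ≤ ((γ - (∫ s in Set.Ioi (0 : ℝ), g s)) / α) * ‖v + α • u‖ ^ 2
          + (((β - γ / α) * α + (∫ s in Set.Ioi (0 : ℝ), g s)) / α) * ‖v‖ ^ 2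
          + ‖w + α • ι v‖ ^ 2
          + (∫ s in Set.Ioi (0 : ℝ), -g' s * ‖η s‖ ^ 2)
          + α * (∫ s in Set.Ioi (0 : ℝ), g s * ‖η s‖ ^ 2)
          + 2 * (∫ s in Set.Ioi (0 : ℝ), g s * (inner ℝ (η s) v : ℝ)) ∧
      ((γ - (∫ s in Set.Ioi (0 : ℝ), g s)) / α) * ‖v + α • u‖ ^ 2
          + (((β - γ / α) * α + (∫ s in Set.Ioi (0 : ℝ), g s)) / α) * ‖v‖ ^ 2
          + ‖w + α • ι v‖ ^ 2
          + (∫ s in Set.Ioi (0 : ℝ), -g' s * ‖η s‖ ^ 2)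
          + α * (∫ s in Set.Ioi (0 : ℝ), g s * ‖η s‖ ^ 2)
          + 2 * (∫ s in Set.Ioi (0 : ℝ), g s * (inner ℝ (η s) v : ℝ))
        ≤ C * (‖u‖ ^ 2 + ‖v‖ ^ 2 + ‖w‖ ^ 2 + (∫ s in Set.Ioi (0 : ℝ), -g' s * ‖η s‖ ^ 2)
            + ∫ s in Set.Ioi (0 : ℝ), g s * ‖η s‖ ^ 2) := by
    classical
  have hαne : α ≠ 0 := ne_of_gt hα
  -- opaque names for the constants
  obtain ⟨κ, hκdef⟩ : ∃ x : ℝ, x = ∫ s in Set.Ioi (0 : ℝ), g s := ⟨_, rfl⟩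
  rw [← hκdef] at hκγ ⊢
  have hκ0 : 0 ≤ κ := by
    rw [hκdef]; exact setIntegral_nonneg measurableSet_Ioi hg_nonneg
  have hγκ : 0 < γ - κ := by linarith
  obtain ⟨ϰ, hϰdef⟩ : ∃ x : ℝ, x = β - γ / α := ⟨_, rfl⟩
  rw [← hϰdef] at hϰ ⊢
  obtain ⟨c₁, hc₁def⟩ : ∃ x : ℝ, x = (γ - κ) / α := ⟨_, rfl⟩
  rw [← hc₁def]
  have hc₁ : 0 < c₁ := by rw [hc₁def]; exact div_pos hγκ hα
  have hc₁ne : c₁ ≠ 0 := ne_of_gt hc₁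
  have hϰne : ϰ ≠ 0 := ne_of_gt hϰ
  obtain ⟨c₂, hc₂def⟩ : ∃ x : ℝ, x = (ϰ * α + κ) / α := ⟨_, rfl⟩
  rw [← hc₂def]
  have hc₂ : 0 < c₂ := by
    rw [hc₂def]; exact div_pos (by have := mul_pos hϰ hα; linarith) hα
  have hαc2 : (0:ℝ) ≤ α ^ 2 * c ^ 2 := mul_nonneg (sq_nonneg α) (sq_nonneg c)
  have hA₂0 : (0:ℝ) ≤ 1 + 2 / α ^ 2 + 2 * α ^ 2 * c ^ 2 := by positivity
  obtain ⟨K₁, hK₁def⟩ : ∃ x : ℝ,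
      x = 2 * c₁ * α ^ 2 + (2 * c₁ + c₂ + 2 * α ^ 2 * c ^ 2 + κ) + 2 + 1 + (α + 1) := ⟨_, rfl⟩
  obtain ⟨K₂, hK₂def⟩ : ∃ x : ℝ,
      x = 2 / (α ^ 2 * c₁) + (1 + 2 / α ^ 2 + 2 * α ^ 2 * c ^ 2) / ϰ + 2 := ⟨_, rfl⟩
  have ht1 : (0:ℝ) ≤ 2 * c₁ * α ^ 2 := mul_nonneg (by linarith) (sq_nonneg α)
  have ht2 : (0:ℝ) ≤ 2 * c₁ + c₂ + 2 * α ^ 2 * c ^ 2 + κ := by linarith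
  have hK₁3 : (3:ℝ) ≤ K₁ := by rw [hK₁def]; linarith
  have hK₂a : (0:ℝ) ≤ 2 / (α ^ 2 * c₁) :=
    div_nonneg (by norm_num) (mul_nonneg (sq_nonneg α) hc₁.le)
  have hK₂b : (0:ℝ) ≤ (1 + 2 / α ^ 2 + 2 * α ^ 2 * c ^ 2) / ϰ := div_nonneg hA₂0 hϰ.le
  have hK₂2 : (2:ℝ) ≤ K₂ := by rw [hK₂def]; linarith
  have hK₂pos : (0:ℝ) < K₂ := by linarith
  refine ⟨K₁ + K₂, by linarith, fun u v w η hηm hI1int hI2int => ?_⟩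
  obtain ⟨C, hCdef⟩ : ∃ x : ℝ, x = K₁ + K₂ := ⟨_, rfl⟩
  rw [← hCdef]
  have hCpos : (0:ℝ) < C := by rw [hCdef]; linarith
  have hK₂C : K₂ ≤ C := by rw [hCdef]; linarith
  -- opaque names for the quadratic quantities
  obtain ⟨U, hUdef⟩ : ∃ x : ℝ, x = ‖u‖ ^ 2 := ⟨_, rfl⟩
  obtain ⟨Yv, hYdef⟩ : ∃ x : ℝ, x = ‖v‖ ^ 2 := ⟨_, rfl⟩
  obtain ⟨W, hWdef⟩ : ∃ x : ℝ, x = ‖w‖ ^ 2 := ⟨_, rfl⟩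
  obtain ⟨X, hXdef⟩ : ∃ x : ℝ, x = ‖v + α • u‖ ^ 2 := ⟨_, rfl⟩
  obtain ⟨Z, hZdef⟩ : ∃ x : ℝ, x = ‖w + α • ι v‖ ^ 2 := ⟨_, rfl⟩
  obtain ⟨I1, hI1def⟩ : ∃ x : ℝ, x = ∫ s in Set.Ioi (0 : ℝ), -g' s * ‖η s‖ ^ 2 := ⟨_, rfl⟩
  obtain ⟨I2, hI2def⟩ : ∃ x : ℝ, x = ∫ s in Set.Ioi (0 : ℝ), g s * ‖η s‖ ^ 2 := ⟨_, rfl⟩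
  obtain ⟨J, hJdef⟩ : ∃ x : ℝ, x = ∫ s in Set.Ioi (0 : ℝ), g s * (inner ℝ (η s) v : ℝ) :=
    ⟨_, rfl⟩
  rw [← hUdef, ← hYdef, ← hWdef, ← hXdef, ← hZdef, ← hI1def, ← hI2def, ← hJdef]
  have hU0 : 0 ≤ U := hUdef ▸ sq_nonneg _
  have hY0 : 0 ≤ Yv := hYdef ▸ sq_nonneg _
  have hW0 : 0 ≤ W := hWdef ▸ sq_nonneg _
  have hX0 : 0 ≤ X := hXdef ▸ sq_nonneg _
  have hZ0 : 0 ≤ Z := hZdef ▸ sq_nonneg _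
  have hI10 : 0 ≤ I1 := by
    rw [hI1def]
    exact setIntegral_nonneg measurableSet_Ioi fun s hs =>
      mul_nonneg (by linarith [hg'_nonpos s hs]) (sq_nonneg _)
  have hI20 : 0 ≤ I2 := by
    rw [hI2def]
    exact setIntegral_nonneg measurableSet_Ioi fun s hs =>
      mul_nonneg (hg_nonneg s hs) (sq_nonneg _)
  -- integrability of the cross term
  have hip_meas : AEStronglyMeasurable (fun s => (inner ℝ (η s) v : ℝ))
      (MeasureTheory.volume.restrict (Set.Ioi 0)) :=
    hηm.inner aestronglyMeasurable_const
  have hJint : IntegrableOn (fun s => g s * (inner ℝ (η s) v : ℝ)) (Set.Ioi 0) := by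
    refine Integrable.mono' (hI2int.add (hg_int.const_mul (‖v‖ ^ 2)))
      (hg_int.aestronglyMeasurable.mul hip_meas) ?_
    filter_upwards [ae_restrict_mem measurableSet_Ioi] with s hs
    have hg0 := hg_nonneg s hs
    have hip := abs_real_inner_le_norm (η s) v
    have h2 : |(inner ℝ (η s) v : ℝ)| ≤ ‖η s‖ ^ 2 + ‖v‖ ^ 2 :=
      le_trans hip (mgt_mul_le_sum_sq _ _)
    have h3 := mul_le_mul_of_nonneg_left h2 hg0
    simp only [Pi.add_apply]
    rw [Real.norm_eq_abs, abs_mul, abs_of_nonneg hg0]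
    linarith [h3]
  -- two positivity facts from completing squares under the integral
  have hP1 : 0 ≤ α ^ 2 * I2 + Yv * κ + 2 * α * J := by
    have key : 0 ≤ ∫ s in Set.Ioi (0 : ℝ),
        (α ^ 2 * (g s * ‖η s‖ ^ 2) + ‖v‖ ^ 2 * g s
          + 2 * α * (g s * (inner ℝ (η s) v : ℝ))) := by
      refine setIntegral_nonneg measurableSet_Ioi fun s hs => ?_
      have hg0 := hg_nonneg s hs
      have hsq : 0 ≤ g s * ‖α • η s + v‖ ^ 2 := mul_nonneg hg0 (sq_nonneg _)
      have hexp : ‖α • η s + v‖ ^ 2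
          = α ^ 2 * ‖η s‖ ^ 2 + 2 * α * (inner ℝ (η s) v : ℝ) + ‖v‖ ^ 2 := by
        rw [norm_add_sq_real, real_inner_smul_left, norm_smul, Real.norm_eq_abs,
          abs_of_pos hα]
        ring
      rw [hexp] at hsq
      linarith [hsq]
    have i1 : IntegrableOn (fun s => α ^ 2 * (g s * ‖η s‖ ^ 2)) (Set.Ioi 0) :=
      hI2int.const_mul _
    have i2 : IntegrableOn (fun s => ‖v‖ ^ 2 * g s) (Set.Ioi 0) := hg_int.const_mul _
    have i3 : IntegrableOn (fun s => 2 * α * (g s * (inner ℝ (η s) v : ℝ))) (Set.Ioi 0) :=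
      hJint.const_mul _
    have i12 : IntegrableOn (fun s => α ^ 2 * (g s * ‖η s‖ ^ 2) + ‖v‖ ^ 2 * g s)
        (Set.Ioi 0) := i1.add i2
    rw [integral_add i12 i3, integral_add i1 i2,
      integral_const_mul, integral_const_mul, integral_const_mul,
      ← hκdef, ← hI2def, ← hJdef, ← hYdef] at key
    linarith
  have hP2 : 0 ≤ I2 + Yv * κ - 2 * J := by
    have key : 0 ≤ ∫ s in Set.Ioi (0 : ℝ),
        ((g s * ‖η s‖ ^ 2) + ‖v‖ ^ 2 * g s - 2 * (g s * (inner ℝ (η s) v : ℝ))) := by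
      refine setIntegral_nonneg measurableSet_Ioi fun s hs => ?_
      have hg0 := hg_nonneg s hs
      have hsq : 0 ≤ g s * ‖η s - v‖ ^ 2 := mul_nonneg hg0 (sq_nonneg _)
      have hexp : ‖η s - v‖ ^ 2
          = ‖η s‖ ^ 2 - 2 * (inner ℝ (η s) v : ℝ) + ‖v‖ ^ 2 := by
        rw [norm_sub_sq_real]
      rw [hexp] at hsq
      linarith [hsq]
    have i1 : IntegrableOn (fun s => g s * ‖η s‖ ^ 2) (Set.Ioi 0) := hI2int
    have i2 : IntegrableOn (fun s => ‖v‖ ^ 2 * g s) (Set.Ioi 0) := hg_int.const_mul _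
    have i3 : IntegrableOn (fun s => 2 * (g s * (inner ℝ (η s) v : ℝ))) (Set.Ioi 0) :=
      hJint.const_mul _
    have i12 : IntegrableOn (fun s => g s * ‖η s‖ ^ 2 + ‖v‖ ^ 2 * g s) (Set.Ioi 0) :=
      i1.add i2
    rw [integral_sub i12 i3, integral_add i1 i2,
      integral_const_mul, integral_const_mul,
      ← hκdef, ← hI2def, ← hJdef, ← hYdef] at key
    linarith
  -- elementary norm inequalities
  have hαu : ‖α • u‖ = α * ‖u‖ := by
    rw [norm_smul, Real.norm_eq_abs, abs_of_pos hα]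
  have hXle : X ≤ 2 * Yv + 2 * α ^ 2 * U := by
    have h := norm_add_le v (α • u)
    rw [hαu] at h
    have h1 : ‖v + α • u‖ ^ 2 ≤ (‖v‖ + α * ‖u‖) ^ 2 := mgt_sq_le_of_le (norm_nonneg _) h
    have h2 := mgt_sq_add_le ‖v‖ (α * ‖u‖)
    rw [hXdef, hYdef, hUdef]
    linarith [h1, h2]
  have hu2 : α ^ 2 * U ≤ 2 * X + 2 * Yv := by
    have h := norm_sub_le (v + α • u) v
    have he : v + α • u - v = α • u := by abel
    rw [he, hαu] at h
    have h1 : (α * ‖u‖) ^ 2 ≤ (‖v + α • u‖ + ‖v‖) ^ 2 :=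
      mgt_sq_le_of_le (mul_nonneg hα.le (norm_nonneg _)) h
    have h2 := mgt_sq_add_le ‖v + α • u‖ ‖v‖
    rw [hXdef, hYdef, hUdef]
    linarith [h1, h2]
  have hcv0 : 0 ≤ c * ‖v‖ := le_trans (norm_nonneg _) (hι v)
  have hαιv : ‖α • ι v‖ ≤ α * (c * ‖v‖) := by
    rw [norm_smul, Real.norm_eq_abs, abs_of_pos hα]
    exact mul_le_mul_of_nonneg_left (hι v) hα.le
  have hZle : Z ≤ 2 * W + 2 * α ^ 2 * c ^ 2 * Yv := by
    have h : ‖w + α • ι v‖ ≤ ‖w‖ + α * (c * ‖v‖) :=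
      le_trans (norm_add_le w (α • ι v)) (by linarith [hαιv])
    have h1 : ‖w + α • ι v‖ ^ 2 ≤ (‖w‖ + α * (c * ‖v‖)) ^ 2 :=
      mgt_sq_le_of_le (norm_nonneg _) h
    have h2 := mgt_sq_add_le ‖w‖ (α * (c * ‖v‖))
    rw [hZdef, hWdef, hYdef]
    linarith [h1, h2]
  have hw2 : W ≤ 2 * Z + 2 * α ^ 2 * c ^ 2 * Yv := by
    have h : ‖w‖ ≤ ‖w + α • ι v‖ + α * (c * ‖v‖) := by
      have h' := norm_sub_le (w + α • ι v) (α • ι v)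
      have he : w + α • ι v - α • ι v = w := by abel
      rw [he] at h'
      linarith [hαιv]
    have h1 : ‖w‖ ^ 2 ≤ (‖w + α • ι v‖ + α * (c * ‖v‖)) ^ 2 :=
      mgt_sq_le_of_le (norm_nonneg _) h
    have h2 := mgt_sq_add_le ‖w + α • ι v‖ (α * (c * ‖v‖))
    rw [hZdef, hWdef, hYdef]
    linarith [h1, h2]
  constructor
  · -- lower bound
    have hS : 0 ≤ (c₂ - ϰ) * Yv + α * I2 + 2 * J := by
      have heq : (c₂ - ϰ) * Yv + α * I2 + 2 * J
          = (α ^ 2 * I2 + Yv * κ + 2 * α * J) / α := by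
        rw [hc₂def]
        field_simp
        ring
      rw [heq]
      exact div_nonneg hP1 hα.le
    -- coefficient facts for K₂
    have f1 : 2 / α ^ 2 ≤ K₂ * c₁ := by
      have h : K₂ * c₁
          = 2 / α ^ 2 + ((1 + 2 / α ^ 2 + 2 * α ^ 2 * c ^ 2) / ϰ + 2) * c₁ := by
        rw [hK₂def]
        field_simp
        ring
      have h0 : 0 ≤ ((1 + 2 / α ^ 2 + 2 * α ^ 2 * c ^ 2) / ϰ + 2) * c₁ :=
        mul_nonneg (by linarith) hc₁.le
      linarith
    have f2 : 1 + 2 / α ^ 2 + 2 * α ^ 2 * c ^ 2 ≤ K₂ * ϰ := by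
      have h : K₂ * ϰ
          = (1 + 2 / α ^ 2 + 2 * α ^ 2 * c ^ 2) + (2 / (α ^ 2 * c₁) + 2) * ϰ := by
        rw [hK₂def]
        field_simp
        ring
      have h0 : 0 ≤ (2 / (α ^ 2 * c₁) + 2) * ϰ := mul_nonneg (by linarith) hϰ.le
      linarith
    have hu2' : U ≤ 2 / α ^ 2 * X + 2 / α ^ 2 * Yv := by
      rw [div_mul_eq_mul_div, div_mul_eq_mul_div, ← add_div,
        le_div_iff₀ (by positivity : (0:ℝ) < α ^ 2)]
      linarith [hu2]
    have hEG : U + Yv + W + I1 ≤ K₂ * (c₁ * X + ϰ * Yv + Z + I1) := by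
      have m1 := mul_le_mul_of_nonneg_right f1 hX0
      have m2 := mul_le_mul_of_nonneg_right f2 hY0
      have m3 := mul_le_mul_of_nonneg_right hK₂2 hZ0
      have m4 := mul_le_mul_of_nonneg_right (by linarith : (1:ℝ) ≤ K₂) hI10
      have expand : K₂ * (c₁ * X + ϰ * Yv + Z + I1)
          = K₂ * c₁ * X + K₂ * ϰ * Yv + K₂ * Z + K₂ * I1 := by ring
      rw [expand]
      linarith [hu2', hw2, m1, m2, m3, m4]
    have hGF : c₁ * X + ϰ * Yv + Z + I1
        ≤ c₁ * X + c₂ * Yv + Z + I1 + α * I2 + 2 * J := by linarith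
    have hE0 : 0 ≤ U + Yv + W + I1 := by linarith
    have step1 : 1 / C * (U + Yv + W + I1) ≤ 1 / K₂ * (U + Yv + W + I1) :=
      mul_le_mul_of_nonneg_right (one_div_le_one_div_of_le hK₂pos hK₂C) hE0
    have step2 : 1 / K₂ * (U + Yv + W + I1)
        ≤ 1 / K₂ * (K₂ * (c₁ * X + ϰ * Yv + Z + I1)) :=
      mul_le_mul_of_nonneg_left hEG (by positivity)
    have step3 : 1 / K₂ * (K₂ * (c₁ * X + ϰ * Yv + Z + I1))
        = c₁ * X + ϰ * Yv + Z + I1 := by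
      field_simp
    linarith
  · -- upper bound
    have m0 := mul_le_mul_of_nonneg_left hXle hc₁.le
    have hFle : c₁ * X + c₂ * Yv + Z + I1 + α * I2 + 2 * J
        ≤ 2 * c₁ * α ^ 2 * U + (2 * c₁ + c₂ + κ + 2 * α ^ 2 * c ^ 2) * Yv
          + 2 * W + I1 + (α + 1) * I2 := by linarith [m0, hZle, hP2]
    have g1 : 2 * c₁ * α ^ 2 ≤ C := by rw [hCdef, hK₁def]; linarith
    have g2 : 2 * c₁ + c₂ + κ + 2 * α ^ 2 * c ^ 2 ≤ C := by rw [hCdef, hK₁def]; linarith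
    have g3 : (2:ℝ) ≤ C := by rw [hCdef, hK₁def]; linarith
    have g4 : (1:ℝ) ≤ C := by rw [hCdef, hK₁def]; linarith
    have g5 : α + 1 ≤ C := by rw [hCdef, hK₁def]; linarith
    have e1 := mul_le_mul_of_nonneg_right g1 hU0
    have e2 := mul_le_mul_of_nonneg_right g2 hY0
    have e3 := mul_le_mul_of_nonneg_right g3 hW0
    have e4 := mul_le_mul_of_nonneg_right g4 hI10
    have e5 := mul_le_mul_of_nonneg_right g5 hI20
    have expand : C * (U + Yv + W + I1 + I2)
        = C * U + C * Yv + C * W + C * I1 + C * I2 := by ring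
    rw [expand]
    linarith
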